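/- Let T form a wandering N-gon under f(z) = z^d. If q is a wandering N-gon's critical leaf (a critical chord in the limit set ℒ_ω(T)), then q is disjoint from CH(T_i) for every i ≥ 0. -/

import Mathlib

open MeasureTheory Set Metric Filter Topology

noncomputable section

abbrev S1 := AddCircle (1 : ℝ)

def fd (d : ℕ) : S1 → S1 := fun x => d • x

def len (A : Set S1) : ℝ := (volume A).toReal

def IsHole (B H : Set S1) : Prop := ∃ x ∈ Bᶜ, H = connectedComponentIn Bᶜ x

def openArc (u w : S1) : Set S1 := {x | SBtw.sbtw u x w}

def OrientPresOn (g : S1 → S1) (B : Set S1) : Prop :=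
  Set.InjOn g B ∧ ∀ a ∈ B, ∀ b ∈ B, ∀ c ∈ B, SBtw.sbtw a b c → SBtw.sbtw (g a) (g b) (g c)

def emb (x : S1) : ℂ := (AddCircle.toCircle x : ℂ)

def chord (a b : S1) : Set ℂ := segment ℝ (emb a) (emb b)

def CH (A : Set S1) : Set ℂ := convexHull ℝ (emb '' A)

def Wandering (d N : ℕ) (T : Set S1) : Prop :=
  ∀ i j : ℕ, ((fd d)^[i] '' T).ncard = N ∧
    (i ≠ j → Disjoint (CH ((fd d)^[i] '' T)) (CH ((fd d)^[j] '' T)))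

def IsHoleEnum (B : Set S1) {N : ℕ} (H : Fin N → Set S1) : Prop :=
  Function.Injective H ∧ (∀ k, IsHole B (H k)) ∧ (∀ G, IsHole B G → ∃ k, H k = G) ∧
  ∀ k l : Fin N, k ≤ l → len (H k) ≤ len (H l)

def rem (d : ℕ) (s : ℝ) : ℝ := s - (⌊(d : ℝ) * s⌋ : ℝ) / d

def ImageHoleRel (g : S1 → S1) (H K : Set S1) : Prop :=
  ∃ u w : S1, u ≠ w ∧ H = openArc u w ∧ K = openArc (g u) (g w)

def InLimitSet (d : ℕ) (T : Set S1) (a b : S1) : Prop :=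
  ∃ φ : ℕ → ℕ, StrictMono φ ∧ ∃ u v : ℕ → S1,
    (∀ n, u n ∈ (fd d)^[φ n] '' T ∧ v n ∈ (fd d)^[φ n] '' T) ∧
    Tendsto (fun n => hausdorffDist (chord (u n) (v n)) (chord a b)) atTop (nhds 0)


open Complex Real

def E (t : ℝ) : ℂ := Complex.exp (↑(2 * π * t) * Complex.I)

lemma norm_E (t : ℝ) : ‖E t‖ = 1 := by
  rw [E, Complex.norm_exp_ofReal_mul_I]

lemma E_mul (x y : ℝ) : E x * E y = E (x + y) := by
  rw [E, E, E, ← Complex.exp_add]; congr 1; push_cast; ring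

lemma conj_E (x : ℝ) : (starRingEnd ℂ) (E x) = E (-x) := by
  rw [E, E, ← Complex.exp_conj]; congr 1
  simp only [map_mul, Complex.conj_ofReal, Complex.conj_I]
  push_cast; ring

lemma E_im (x : ℝ) : (E x).im = Real.sin (2 * π * x) := by
  rw [E, Complex.exp_ofReal_mul_I_im]

lemma exp_sub_exp (x : ℝ) :
    Complex.exp (↑x * Complex.I) - Complex.exp (↑(-x) * Complex.I)
      = 2 * ↑(Real.sin x) * Complex.I := by
  obtain ⟨y, hy⟩ : ∃ y, Real.sin x = y := ⟨_, rfl⟩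
  apply Complex.ext
  · rw [Complex.sub_re, Complex.exp_ofReal_mul_I_re, Complex.exp_ofReal_mul_I_re,
      Real.cos_neg, hy]
    simp [Complex.mul_re]
  · rw [Complex.sub_im, Complex.exp_ofReal_mul_I_im, Complex.exp_ofReal_mul_I_im,
      Real.sin_neg, hy]
    simp [Complex.mul_im]
    ring

lemma E_sub (s r : ℝ) :
    E s - E r = E ((r + s)/2) * (2 * ↑(Real.sin (π * (s - r))) * Complex.I) := by
  have h1 : E s = E ((r+s)/2) * Complex.exp (↑(π * (s - r)) * Complex.I) := by
    rw [E, E, ← Complex.exp_add]; congr 1; push_cast; ring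
  have h2 : E r = E ((r+s)/2) * Complex.exp (↑(-(π * (s - r))) * Complex.I) := by
    rw [E, E, ← Complex.exp_add]; congr 1; push_cast; ring
  rw [h1, h2, ← mul_sub, exp_sub_exp]

def G (u w z : ℂ) : ℝ := ((starRingEnd ℂ) (w - u) * (z - u)).im

lemma G_E (r s t : ℝ) :
    G (E r) (E s) (E t) =
      4 * Real.sin (π*(s-r)) * Real.sin (π*(t-r)) * Real.sin (π*(t-s)) := by
  obtain ⟨y₁, hy₁⟩ : ∃ y, Real.sin (π*(s-r)) = y := ⟨_, rfl⟩
  obtain ⟨y₂, hy₂⟩ : ∃ y, Real.sin (π*(t-r)) = y := ⟨_, rfl⟩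
  have key : (starRingEnd ℂ) (E s - E r) * (E t - E r)
      = ↑(4 * y₁ * y₂) * E ((t - s)/2) := by
    rw [E_sub s r, E_sub t r, hy₁, hy₂]
    rw [map_mul, map_mul, conj_E, Complex.conj_I]
    have hc : ((starRingEnd ℂ) (2 * ↑y₁ : ℂ)) = 2 * ↑y₁ := by
      rw [map_mul, Complex.conj_ofReal, map_ofNat]
    rw [hc]
    have hE : E (-((r + s) / 2)) * E ((r + t) / 2) = E ((t - s)/2) := by
      rw [E_mul]; congr 1; ring
    calc E (-((r + s) / 2)) * (2 * ↑y₁ * -Complex.I) *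
          (E ((r + t) / 2) * (2 * ↑y₂ * Complex.I))
        = (E (-((r + s) / 2)) * E ((r + t) / 2)) *
          ((2 * (↑y₁:ℂ)) * (2 * ↑y₂)) * (-(Complex.I * Complex.I)) := by ring
      _ = _ := by rw [hE, Complex.I_mul_I]; push_cast; ring
  have him : (E ((t - s)/2)).im = Real.sin (π * (t - s)) := by
    rw [E_im]; congr 1; ring
  rw [G, key]
  rw [hy₁, hy₂]
  simp [Complex.mul_im, him]
  try ring

lemma G_affine (u w p q : ℂ) (t : ℝ) :
    G u w ((1 - t) • p + t • q) = (1 - t) * G u w p + t * G u w q := by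
  simp only [G, Complex.real_smul]
  simp only [Complex.mul_im, Complex.add_im, Complex.add_re, Complex.sub_im, Complex.sub_re,
    Complex.mul_re, Complex.ofReal_re, Complex.ofReal_im]
  ring

lemma G_self_zero (u w z : ℂ) (h : w = u) : G u w z = 0 := by
  simp [G, h]

lemma normSq_seg (u w : ℂ) (hu : ‖u‖ = 1) (hw : ‖w‖ = 1) (t : ℝ) :
    Complex.normSq (u + t • (w - u)) = 1 + (t^2 - t) * Complex.normSq (w - u) := by
  have h1 : Complex.normSq u = 1 := by
    rw [← Complex.sq_norm, hu]; norm_num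
  have h2 : Complex.normSq w = 1 := by
    rw [← Complex.sq_norm, hw]; norm_num
  simp only [Complex.normSq_apply, Complex.add_re, Complex.add_im, Complex.sub_re,
    Complex.sub_im, Complex.real_smul, Complex.mul_re, Complex.mul_im,
    Complex.ofReal_re, Complex.ofReal_im] at h1 h2 ⊢
  linear_combination (1 - t) * h1 + t * h2

lemma line_param (u w z : ℂ) (hne : w ≠ u) (h : G u w z = 0) :
    ∃ t : ℝ, z = u + t • (w - u) := by
  have hc0 : w - u ≠ 0 := sub_ne_zero.mpr hne
  have hq : (starRingEnd ℂ) (w - u) * (z - u)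
      = (((starRingEnd ℂ) (w - u) * (z - u)).re : ℂ) := by
    apply Complex.ext
    · rw [Complex.ofReal_re]
    · rw [Complex.ofReal_im]; exact h
  have hnsq : Complex.normSq (w - u) ≠ 0 := by
    simp [Complex.normSq_eq_zero, hc0]
  have hnsqC : ((Complex.normSq (w - u) : ℝ) : ℂ) ≠ 0 := by
    exact_mod_cast hnsq
  set R : ℝ := ((starRingEnd ℂ) (w - u) * (z - u)).re with hR
  refine ⟨R / Complex.normSq (w - u), ?_⟩
  rw [Complex.real_smul]
  have key : (Complex.normSq (w - u) : ℂ) * (z - u) = (R : ℂ) * (w - u) := by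
    rw [← Complex.mul_conj]
    calc (w - u) * (starRingEnd ℂ) (w - u) * (z - u)
        = (w - u) * ((starRingEnd ℂ) (w - u) * (z - u)) := by ring
      _ = _ := by rw [hq]; ring
  have key2 : (Complex.normSq (w - u) : ℂ) * (z - u)
      = (Complex.normSq (w - u) : ℂ) * ((↑(R / Complex.normSq (w - u)) : ℂ) * (w - u)) := by
    rw [key]
    push_cast
    field_simp
  have := mul_left_cancel₀ hnsqC key2
  linear_combination this

lemma mem_segment_param (u w z : ℂ) (hu : ‖u‖ = 1) (hw : ‖w‖ = 1)
    (t : ℝ) (hz : z = u + t • (w - u)) (hz1 : ‖z‖ ≤ 1) :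
    z ∈ segment ℝ u w := by
  have hns : Complex.normSq z ≤ 1 := by
    rw [← Complex.sq_norm]; nlinarith [norm_nonneg z]
  rw [hz, normSq_seg u w hu hw t] at hns
  rcases eq_or_ne w u with h | h
  · rw [hz, h]; simp [left_mem_segment]
  have hpos : 0 < Complex.normSq (w - u) := by
    have : w - u ≠ 0 := sub_ne_zero.mpr h
    exact Complex.normSq_pos.mpr this
  have h6 : t^2 - t ≤ 0 := by
    by_contra hcon
    push_neg at hcon
    nlinarith [mul_pos hcon hpos]
  have ht : t ∈ Set.Icc (0:ℝ) 1 := by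
    constructor <;> nlinarith [sq_nonneg t, sq_nonneg (t-1)]
  rw [segment_eq_image']
  exact ⟨t, ht, hz.symm⟩

lemma circle_mem_segment (u w z : ℂ) (hu : ‖u‖ = 1) (hw : ‖w‖ = 1)
    (hne : w ≠ u) (hz : z ∈ segment ℝ u w) (hz1 : ‖z‖ = 1) :
    z = u ∨ z = w := by
  rw [segment_eq_image'] at hz
  obtain ⟨t, ht, hzt⟩ := hz
  have hns : Complex.normSq z = 1 := by rw [← Complex.sq_norm, hz1]; norm_num
  rw [← hzt, normSq_seg u w hu hw t] at hns
  have hpos : 0 < Complex.normSq (w - u) := Complex.normSq_pos.mpr (sub_ne_zero.mpr hne)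
  have : t ^ 2 - t = 0 := by nlinarith
  have : t = 0 ∨ t = 1 := by
    rcases mul_eq_zero.mp (by linarith [this] : t * (t - 1) = 0) with h | h
    · exact Or.inl h
    · exact Or.inr (by linarith)
  rcases this with h | h
  · left; rw [← hzt, h]; simp
  · right; rw [← hzt, h]; simp
  
lemma cross_segments (u w p q : ℂ) (hu : ‖u‖ = 1) (hw : ‖w‖ = 1)
    (hp : ‖p‖ ≤ 1) (hq : ‖q‖ ≤ 1)
    (h1 : G u w p < 0) (h2 : 0 < G u w q) :
    (segment ℝ p q ∩ segment ℝ u w).Nonempty := by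
  have hne : w ≠ u := by
    intro h
    rw [G_self_zero u w p h] at h1
    exact lt_irrefl 0 h1
  set A := G u w p with hA
  set B := G u w q with hB
  have hAB : A - B < 0 := by linarith
  set t₀ : ℝ := A / (A - B) with ht₀
  have ht00 : 0 < t₀ := div_pos_iff.mpr (Or.inr ⟨h1, hAB⟩)
  have hABne : A - B ≠ 0 := ne_of_lt hAB
  have hkey : (t₀ - 1) * (A - B) = B := by
    rw [ht₀]; field_simp; ring
  have ht01 : t₀ < 1 := by
    by_contra hcon
    push_neg at hcon
    have h7 : (t₀ - 1) * (A - B) ≤ 0 :=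
      mul_nonpos_of_nonneg_of_nonpos (by linarith) (le_of_lt hAB)
    linarith [hkey ▸ h7]
  set z := (1 - t₀) • p + t₀ • q with hzdef
  have hzseg : z ∈ segment ℝ p q := ⟨1 - t₀, t₀, by linarith, by linarith, by ring, rfl⟩
  have hGz : G u w z = 0 := by
    rw [hzdef, G_affine, ← hA, ← hB, ht₀]
    field_simp
    ring
  have hzb : ‖z‖ ≤ 1 := by
    have h1' : p ∈ Metric.closedBall (0:ℂ) 1 := by
      simpa using hp
    have h2' : q ∈ Metric.closedBall (0:ℂ) 1 := by
      simpa using hq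
    have := (convex_closedBall (0:ℂ) 1).segment_subset h1' h2' hzseg
    simpa using this
  obtain ⟨t, htz⟩ := line_param u w z hne hGz
  exact ⟨z, hzseg, mem_segment_param u w z hu hw t htz hzb⟩

lemma sin_pi_pos {x : ℝ} (h0 : 0 < x) (h1 : x < 1) : 0 < Real.sin (π * x) := by
  apply Real.sin_pos_of_pos_of_lt_pi
  · positivity
  · nlinarith [Real.pi_pos]

lemma chordX (a b c e : ℝ) (h1 : a < b) (h2 : b < c) (h3 : c < e) (h4 : e < a + 1) :
    (segment ℝ (E b) (E e) ∩ segment ℝ (E a) (E c)).Nonempty := by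
  apply cross_segments (E a) (E c) (E b) (E e) (norm_E a) (norm_E c)
    (le_of_eq (norm_E b)) (le_of_eq (norm_E e))
  · rw [G_E]
    have s1 : 0 < Real.sin (π * (c - a)) := sin_pi_pos (by linarith) (by linarith)
    have s2 : 0 < Real.sin (π * (b - a)) := sin_pi_pos (by linarith) (by linarith)
    have s3 : 0 < Real.sin (π * (c - b)) := sin_pi_pos (by linarith) (by linarith)
    have : Real.sin (π * (b - c)) = - Real.sin (π * (c - b)) := by
      rw [← Real.sin_neg]; congr 1; ring
    rw [this]
    nlinarith [mul_pos (mul_pos s1 s2) s3]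
  · rw [G_E]
    have s1 : 0 < Real.sin (π * (c - a)) := sin_pi_pos (by linarith) (by linarith)
    have s2 : 0 < Real.sin (π * (e - a)) := sin_pi_pos (by linarith) (by linarith)
    have s3 : 0 < Real.sin (π * (e - c)) := sin_pi_pos (by linarith) (by linarith)
    positivity

----------------------------------------------------------------
-- S1 / emb layer
instance fact01 : Fact ((0:ℝ) < 1) := ⟨zero_lt_one⟩

lemma emb_coe (t : ℝ) : emb (↑t : S1) = E t := by
  rw [emb, AddCircle.toCircle_apply_mk, Circle.coe_exp, E]
  congr 1
  push_cast
  ring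

lemma norm_emb (x : S1) : ‖emb x‖ = 1 := by
  rw [emb]; exact Circle.norm_coe _

lemma emb_injective : Function.Injective emb := by
  intro x y h
  exact AddCircle.injective_toCircle one_ne_zero (Subtype.ext h)

lemma continuous_emb : Continuous emb :=
  continuous_subtype_val.comp AddCircle.continuous_toCircle

lemma coe_real_smul (d : ℕ) (x : ℝ) : ((d : ℕ) • (↑x : S1)) = ((d * x : ℝ) : S1) := by
  rw [← AddCircle.coe_nsmul]
  congr 1
  rw [nsmul_eq_mul]

lemma coe_eq_coe_iff {x y : ℝ} : ((x : S1) = (y : S1)) ↔ ∃ k : ℤ, y - x = k := by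
  rw [QuotientAddGroup.eq_iff_sub_mem]
  constructor
  · rintro h
    obtain ⟨k, hk⟩ := AddSubgroup.mem_zmultiples_iff.mp h
    rw [zsmul_eq_mul, mul_one] at hk
    exact ⟨-k, by push_cast; linarith [hk]⟩
  · rintro ⟨k, hk⟩
    refine AddSubgroup.mem_zmultiples_iff.mpr ⟨-k, ?_⟩
    rw [zsmul_eq_mul, mul_one]
    push_cast
    linarith [hk]

lemma isCompact_segment2 (x y : ℂ) : IsCompact (segment ℝ x y) := by
  rw [segment_eq_image']
  exact (isCompact_Icc.image (by continuity))

lemma tendsto_emb_iff {x : ℕ → S1} {a : S1} :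
    Filter.Tendsto x Filter.atTop (nhds a) ↔
      Filter.Tendsto (fun n => emb (x n)) Filter.atTop (nhds (emb a)) := by
  have h := (continuous_emb.isClosedEmbedding emb_injective).isEmbedding.tendsto_nhds_iff
    (g := emb) (f := x) (l := Filter.atTop) (y := a)
  exact h

lemma seg_subset_ball {p q z c : ℂ} {r : ℝ} (hp : dist p c ≤ r) (hq : dist q c ≤ r)
    (hz : z ∈ segment ℝ p q) : dist z c ≤ r := by
  have := (convex_closedBall c r).segment_subset
    (Metric.mem_closedBall.mpr hp) (Metric.mem_closedBall.mpr hq) hz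
  exact Metric.mem_closedBall.mp this

lemma extract (a b : S1) (hab : a ≠ b) (u v : ℕ → S1)
    (hdist : Filter.Tendsto
      (fun n => Metric.hausdorffDist (segment ℝ (emb (u n)) (emb (v n)))
        (segment ℝ (emb a) (emb b))) Filter.atTop (nhds 0)) :
    ∃ ψ : ℕ → ℕ, StrictMono ψ ∧
      ((Filter.Tendsto (fun n => u (ψ n)) Filter.atTop (nhds a) ∧
        Filter.Tendsto (fun n => v (ψ n)) Filter.atTop (nhds b)) ∨
       (Filter.Tendsto (fun n => u (ψ n)) Filter.atTop (nhds b) ∧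
        Filter.Tendsto (fun n => v (ψ n)) Filter.atTop (nhds a))) := by
  have hsph : IsCompact (Metric.sphere (0:ℂ) 1) := isCompact_sphere 0 1
  have hmem : ∀ x : S1, emb x ∈ Metric.sphere (0:ℂ) 1 := fun x => by
    rw [mem_sphere_zero_iff_norm, norm_emb]
  obtain ⟨U, hU, ψ₁, hψ₁, hconvU⟩ := hsph.tendsto_subseq (fun n => hmem (u n))
  obtain ⟨V, hV, ψ₂, hψ₂, hconvV⟩ := hsph.tendsto_subseq (fun n => hmem (v (ψ₁ n)))
  set ψ := ψ₁ ∘ ψ₂ with hψdef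
  have hψ : StrictMono ψ := hψ₁.comp hψ₂
  have hconvU' : Filter.Tendsto (fun n => emb (u (ψ n))) Filter.atTop (nhds U) :=
    hconvU.comp (hψ₂.tendsto_atTop)
  have hconvV' : Filter.Tendsto (fun n => emb (v (ψ n))) Filter.atTop (nhds V) := hconvV
  have hdist' : Filter.Tendsto
      (fun n => Metric.hausdorffDist (segment ℝ (emb (u (ψ n))) (emb (v (ψ n))))
        (segment ℝ (emb a) (emb b))) Filter.atTop (nhds 0) :=
    hdist.comp (hψ.tendsto_atTop)
  set Sab := segment ℝ (emb a) (emb b) with hSab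
  have hSabne : Sab.Nonempty := ⟨emb a, left_mem_segment ℝ _ _⟩
  have hSabc : IsCompact Sab := isCompact_segment2 _ _
  have hfin : ∀ n, EMetric.hausdorffEdist
      (segment ℝ (emb (u (ψ n))) (emb (v (ψ n)))) Sab ≠ ⊤ := fun n =>
    Metric.hausdorffEdist_ne_top_of_nonempty_of_bounded
      ⟨emb (u (ψ n)), left_mem_segment ℝ _ _⟩ hSabne
      (isCompact_segment2 _ _).isBounded hSabc.isBounded
  -- limit of points of the chords lies in Sab
  have hlim_mem : ∀ (W : ℂ) (w : ℕ → S1),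
      (∀ n, emb (w n) ∈ segment ℝ (emb (u (ψ n))) (emb (v (ψ n)))) →
      Filter.Tendsto (fun n => emb (w n)) Filter.atTop (nhds W) → W ∈ Sab := by
    intro W w hwmem hwconv
    have h1 : ∀ n, Metric.infDist (emb (w n)) Sab ≤
        Metric.hausdorffDist (segment ℝ (emb (u (ψ n))) (emb (v (ψ n)))) Sab := fun n =>
      Metric.infDist_le_hausdorffDist_of_mem (hwmem n) (hfin n)
    have h2 : Filter.Tendsto (fun n => Metric.infDist (emb (w n)) Sab)
        Filter.atTop (nhds 0) := by
      apply squeeze_zero (fun n => Metric.infDist_nonneg) h1 hdist'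
    have h3 : Filter.Tendsto (fun n => Metric.infDist (emb (w n)) Sab)
        Filter.atTop (nhds (Metric.infDist W Sab)) :=
      ((Metric.continuous_infDist_pt Sab).tendsto W).comp hwconv
    have h4 : Metric.infDist W Sab = 0 := tendsto_nhds_unique h3 h2
    exact (hSabc.isClosed.mem_iff_infDist_zero hSabne).mpr h4
  have hUV_endpoint : ∀ (W : ℂ), W ∈ Sab → ‖W‖ = 1 →
      W = emb a ∨ W = emb b := by
    intro W hWs hW1
    exact circle_mem_segment (emb a) (emb b) W (norm_emb a) (norm_emb b)
      (fun h => hab (emb_injective h).symm) hWs hW1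
  have habsU : ‖U‖ = 1 := by
    rw [← mem_sphere_zero_iff_norm]; exact hU
  have habsV : ‖V‖ = 1 := by
    rw [← mem_sphere_zero_iff_norm]; exact hV
  have hUmem : U ∈ Sab := hlim_mem U (fun n => u (ψ n))
    (fun n => left_mem_segment ℝ _ _) hconvU'
  have hVmem : V ∈ Sab := hlim_mem V (fun n => v (ψ n))
    (fun n => right_mem_segment ℝ _ _) hconvV'
  have hUab := hUV_endpoint U hUmem habsU
  have hVab := hUV_endpoint V hVmem habsV
  -- U ≠ V
  have hUVne : U ≠ V := by
    intro hUV
    -- both emb a and emb b are limits of points of chords that converge to U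
    have hcollapse : ∀ z : ℂ, z ∈ Sab → z = U := by
      intro z hz
      obtain ⟨zn, hzn⟩ : ∃ zn : ℕ → ℂ, ∀ n,
          zn n ∈ segment ℝ (emb (u (ψ n))) (emb (v (ψ n))) ∧
          dist z (zn n) = Metric.infDist z (segment ℝ (emb (u (ψ n))) (emb (v (ψ n)))) := by
        have h := fun n => (isCompact_segment2 (emb (u (ψ n))) (emb (v (ψ n)))).exists_infDist_eq_dist
          ⟨emb (u (ψ n)), left_mem_segment ℝ _ _⟩ z
        choose zn h1 h2 using h
        exact ⟨zn, fun n => ⟨h1 n, (h2 n).symm⟩⟩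
      have hz0 : Filter.Tendsto (fun n => dist z (zn n)) Filter.atTop (nhds 0) := by
        apply squeeze_zero (fun n => dist_nonneg)
          (fun n => ?_) hdist'
        rw [(hzn n).2]
        rw [Metric.hausdorffDist_comm]
        exact Metric.infDist_le_hausdorffDist_of_mem hz
          (by rw [EMetric.hausdorffEdist_comm]; exact hfin n)
      have hzU : Filter.Tendsto zn Filter.atTop (nhds U) := by
        rw [tendsto_iff_dist_tendsto_zero]
        apply squeeze_zero (fun n => dist_nonneg) (fun n => ?_)
          (by
            have : Filter.Tendsto (fun n => max (dist (emb (u (ψ n))) U) (dist (emb (v (ψ n))) U))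
                Filter.atTop (nhds (max 0 0)) := by
              apply Filter.Tendsto.max
              · exact (tendsto_iff_dist_tendsto_zero.mp hconvU')
              · rw [hUV]; exact (tendsto_iff_dist_tendsto_zero.mp hconvV')
            simpa using this)
        exact seg_subset_ball (le_max_left _ _) (le_max_right _ _) ((hzn n).1)
      have hzn_z : Filter.Tendsto zn Filter.atTop (nhds z) := by
        rw [tendsto_iff_dist_tendsto_zero]
        simpa [dist_comm] using hz0
      exact tendsto_nhds_unique hzn_z hzU
    have ha' := hcollapse (emb a) (left_mem_segment ℝ _ _)
    have hb' := hcollapse (emb b) (right_mem_segment ℝ _ _)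
    exact hab (emb_injective (ha'.trans hb'.symm))
  refine ⟨ψ, hψ, ?_⟩
  rcases hUab with hU1 | hU1 <;> rcases hVab with hV1 | hV1
  · exact absurd (hU1.trans hV1.symm) hUVne
  · left
    constructor
    · rw [tendsto_emb_iff]; rw [hU1] at hconvU'; exact hconvU'
    · rw [tendsto_emb_iff]; rw [hV1] at hconvV'; exact hconvV'
  · right
    constructor
    · rw [tendsto_emb_iff]; rw [hU1] at hconvU'; exact hconvU'
    · rw [tendsto_emb_iff]; rw [hV1] at hconvV'; exact hconvV'
  · exact absurd (hU1.trans hV1.symm) hUVne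

lemma lift_tendsto (a : S1) (α : ℝ) (hα : (↑α : S1) = a) (x : ℕ → S1)
    (hx : Filter.Tendsto x Filter.atTop (nhds a)) :
    ∃ r : ℕ → ℝ, (∀ n, (↑(r n) : S1) = x n) ∧ Filter.Tendsto r Filter.atTop (nhds α) := by
  set c : ℝ := α - 2⁻¹ with hc
  set e := AddCircle.equivIco 1 c with he
  have hmem : α ∈ Set.Ico c (c + 1) :=
    ⟨by rw [hc]; linarith, by rw [hc]; linarith⟩
  have hane : a ≠ (↑c : S1) := by
    rw [← hα]
    intro h
    obtain ⟨k, hk⟩ := coe_eq_coe_iff.mp h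
    have : c - α = -(2:ℝ)⁻¹ := by rw [hc]; ring
    rw [this] at hk
    have : ((2:ℝ))⁻¹ = -(k:ℝ) := by linarith
    have h2 : (2:ℝ) * (-(k:ℝ)) = 1 := by
      rw [← this]; norm_num
    have : (2 * (-k) : ℤ) = 1 := by exact_mod_cast h2
    omega
  have hcont : ContinuousAt e a := AddCircle.continuousAt_equivIco 1 c hane
  have hea : e a = ⟨α, hmem⟩ := by
    rw [← hα, he]
    rw [AddCircle.equivIco]
    rw [QuotientAddGroup.equivIcoMod_coe]
    exact Subtype.ext ((toIcoMod_eq_self _).mpr hmem)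
  refine ⟨fun n => ↑(e (x n)), fun n => ?_, ?_⟩
  · exact e.symm_apply_apply (x n)
  · have h1 : Filter.Tendsto (fun n => e (x n)) Filter.atTop (nhds (e a)) :=
      (hcont.tendsto).comp hx
    have h2 : Filter.Tendsto (fun n => (↑(e (x n)) : ℝ)) Filter.atTop (nhds ↑(e a)) :=
      (continuous_subtype_val.tendsto (e a)).comp h1
    rw [hea] at h2
    exact h2



lemma G_swap (u w z : ℂ) : G w u z = - G u w z := by
  simp only [G, map_sub, Complex.mul_im, Complex.sub_re, Complex.sub_im,
    Complex.conj_re, Complex.conj_im]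
  ring

lemma G_chord (u w : ℂ) (t : ℝ) : G u w (u + t • (w - u)) = 0 := by
  simp only [G, map_sub, Complex.real_smul, Complex.mul_im, Complex.mul_re,
    Complex.add_re, Complex.add_im, Complex.sub_re, Complex.sub_im,
    Complex.conj_re, Complex.conj_im, Complex.ofReal_re, Complex.ofReal_im]
  ring

lemma G_cont (z : ℂ) : Continuous (fun P : ℂ × ℂ => G P.1 P.2 z) := by
  simp only [G, Complex.mul_im, map_sub, Complex.sub_re, Complex.sub_im,
    Complex.conj_re, Complex.conj_im]
  fun_prop

lemma line_circle (u w z : ℂ) (hu : ‖u‖ = 1) (hw : ‖w‖ = 1)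
    (hz : ‖z‖ = 1) (hne : w ≠ u) (hG : G u w z = 0) : z = u ∨ z = w := by
  obtain ⟨t, ht⟩ := line_param u w z hne hG
  have hns : Complex.normSq z = 1 := by rw [← Complex.sq_norm, hz]; norm_num
  rw [ht, normSq_seg u w hu hw t] at hns
  have hpos : 0 < Complex.normSq (w - u) := Complex.normSq_pos.mpr (sub_ne_zero.mpr hne)
  have h0 : t ^ 2 - t = 0 := by nlinarith
  have : t = 0 ∨ t = 1 := by
    rcases mul_eq_zero.mp (by linarith [h0] : t * (t - 1) = 0) with h | h
    · exact Or.inl h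
    · exact Or.inr (by linarith)
  rcases this with h | h
  · left; rw [ht, h]; simp
  · right; rw [ht, h]; simp

def Lmap (c : ℂ) : ℂ →ₗ[ℝ] ℝ where
  toFun z := ((starRingEnd ℂ) c * z).im
  map_add' x y := by simp [mul_add]
  map_smul' r z := by
    simp only [Complex.real_smul, RingHom.id_apply, smul_eq_mul]
    rw [show (starRingEnd ℂ) c * (↑r * z) = ↑r * ((starRingEnd ℂ) c * z) by ring]
    simp [Complex.mul_im, Complex.ofReal_re, Complex.ofReal_im]

lemma G_eq_Lmap (u w z : ℂ) : G u w z = Lmap (w - u) z - Lmap (w - u) u := by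
  simp only [G, Lmap, LinearMap.coe_mk, AddHom.coe_mk, mul_sub]
  rw [Complex.sub_im]

lemma G_centerMass {ι : Type} [Fintype ι] (u w : ℂ) (wt : ι → ℝ) (z : ι → ℂ)
    (hw1 : ∑ i, wt i = 1) :
    G u w (∑ i, wt i • z i) = ∑ i, wt i * G u w (z i) := by
  rw [G_eq_Lmap, map_sum]
  have : ∀ i, Lmap (w - u) (wt i • z i) = wt i * Lmap (w - u) (z i) := fun i => by
    rw [_root_.map_smul]; rfl
  simp_rw [this, G_eq_Lmap, mul_sub, Finset.sum_sub_distrib, ← Finset.sum_mul, hw1, one_mul]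


lemma hull_mem {A : Set S1} {x : S1} (hx : x ∈ A) : emb x ∈ CH A :=
  subset_convexHull ℝ _ (Set.mem_image_of_mem emb hx)

lemma seg_sub_CH {A : Set S1} {x y : S1} (hx : x ∈ A) (hy : y ∈ A) :
    segment ℝ (emb x) (emb y) ⊆ CH A :=
  (convex_convexHull ℝ _).segment_subset (hull_mem hx) (hull_mem hy)

set_option maxHeartbeats 1000000 in
lemma crossing_contra (d N : ℕ) (T : Set S1) (hw : Wandering d N T) (i : ℕ)
    (a' b' : S1) (φ : ℕ → ℕ) (hφ : StrictMono φ) (u v : ℕ → S1)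
    (hmem : ∀ n, u n ∈ (fd d)^[φ n] '' T ∧ v n ∈ (fd d)^[φ n] '' T)
    (hu : Tendsto u atTop (nhds a')) (hv : Tendsto v atTop (nhds b'))
    (s t : S1) (hs : s ∈ (fd d)^[i] '' T) (ht : t ∈ (fd d)^[i] '' T)
    (hGs : G (emb a') (emb b') (emb s) < 0) (hGt : 0 < G (emb a') (emb b') (emb t)) :
    False := by
  have hconv : Tendsto (fun n => (emb (u n), emb (v n))) atTop (nhds (emb a', emb b')) :=
    (tendsto_emb_iff.mp hu).prodMk_nhds (tendsto_emb_iff.mp hv)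
  have h1 : Tendsto ((fun P : ℂ × ℂ => G P.1 P.2 (emb s)) ∘ (fun n => (emb (u n), emb (v n))))
      atTop (nhds (G (emb a') (emb b') (emb s))) :=
    ((G_cont (emb s)).tendsto _).comp hconv
  have h2 : Tendsto ((fun P : ℂ × ℂ => G P.1 P.2 (emb t)) ∘ (fun n => (emb (u n), emb (v n))))
      atTop (nhds (G (emb a') (emb b') (emb t))) :=
    ((G_cont (emb t)).tendsto _).comp hconv
  have hGs' : ∀ᶠ n in atTop, G (emb (u n)) (emb (v n)) (emb s) < 0 := by
    simpa [Function.comp] using h1.eventually (eventually_lt_nhds hGs)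
  have hGt' : ∀ᶠ n in atTop, 0 < G (emb (u n)) (emb (v n)) (emb t) := by
    simpa [Function.comp] using h2.eventually (eventually_gt_nhds hGt)
  have hφ' : ∀ᶠ n in atTop, i < φ n :=
    Filter.eventually_atTop.mpr ⟨i + 1, fun n hn => lt_of_lt_of_le (Nat.lt_of_succ_le hn) (hφ.le_apply)⟩
  obtain ⟨n, hn⟩ := ((hGs'.and hGt').and hφ').exists
  obtain ⟨⟨hn1, hn2⟩, hn3⟩ := hn
  obtain ⟨z, hz1, hz2⟩ := cross_segments (emb (u n)) (emb (v n)) (emb s) (emb t)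
    (norm_emb _) (norm_emb _) (le_of_eq (norm_emb _)) (le_of_eq (norm_emb _)) hn1 hn2
  have hzi : z ∈ CH ((fd d)^[i] '' T) := seg_sub_CH hs ht hz1
  have hzφ : z ∈ CH ((fd d)^[φ n] '' T) := seg_sub_CH (hmem n).1 (hmem n).2 hz2
  exact Set.disjoint_left.mp ((hw i (φ n)).2 (ne_of_lt hn3)) hzi hzφ


lemma touch (d N : ℕ) (T : Set S1) (i : ℕ)
    (a b : S1) (hab : a ≠ b) (x : ℂ) (hx : x ∈ chord a b)
    (hx' : x ∈ CH ((fd d)^[i] '' T))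
    (hsign : ∀ s ∈ (fd d)^[i] '' T, G (emb a) (emb b) (emb s) ≤ 0) :
    a ∈ (fd d)^[i] '' T ∨ b ∈ (fd d)^[i] '' T := by
  have hne : emb b ≠ emb a := fun h => hab (emb_injective h).symm
  have hGx : G (emb a) (emb b) x = 0 := by
    rw [chord, segment_eq_image'] at hx
    obtain ⟨t, _, hxe⟩ := hx
    rw [← hxe]
    exact G_chord _ _ _
  rw [CH, mem_convexHull_iff_exists_fintype] at hx'
  obtain ⟨ι, hfin, wt, z, hw0, hw1, hz, hxsum⟩ := hx'
  have hsum0 : ∑ j, wt j * G (emb a) (emb b) (z j) = 0 := by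
    rw [← G_centerMass _ _ wt z hw1, hxsum, hGx]
  have hterm : ∀ j, wt j * G (emb a) (emb b) (z j) ≤ 0 := by
    intro j
    obtain ⟨s, hs, hzs⟩ := hz j
    exact mul_nonpos_of_nonneg_of_nonpos (hw0 j) (hzs ▸ hsign s hs)
  have hall : ∀ j ∈ Finset.univ, -(wt j * G (emb a) (emb b) (z j)) = 0 := by
    rw [← Finset.sum_eq_zero_iff_of_nonneg (fun j _ => neg_nonneg.mpr (hterm j))]
    rw [Finset.sum_neg_distrib, hsum0, neg_zero]
  obtain ⟨j₀, hj₀⟩ : ∃ j, wt j ≠ 0 := by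
    by_contra h
    push_neg at h
    rw [Finset.sum_eq_zero (fun j _ => h j)] at hw1
    exact one_ne_zero hw1.symm
  have hGz : G (emb a) (emb b) (z j₀) = 0 := by
    have := hall j₀ (Finset.mem_univ j₀)
    rcases mul_eq_zero.mp (by linarith [this] :
        wt j₀ * G (emb a) (emb b) (z j₀) = 0) with h | h
    · exact absurd h hj₀
    · exact h
  obtain ⟨s₀, hs₀, hzs₀⟩ := hz j₀
  rw [← hzs₀] at hGz
  rcases line_circle (emb a) (emb b) (emb s₀) (norm_emb a) (norm_emb b) (norm_emb s₀)
      hne hGz with h | h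
  · left; rw [← emb_injective h]; exact hs₀
  · right; rw [← emb_injective h]; exact hs₀



set_option maxHeartbeats 2000000 in
lemma key (d N : ℕ) (hd : 2 ≤ d) (hN : 3 ≤ N) (T : Set S1) (hw : Wandering d N T)
    (a b : S1) (hab : a ≠ b) (hcr : fd d a = fd d b) (i : ℕ)
    (φ : ℕ → ℕ) (hφ : StrictMono φ) (u v : ℕ → S1)
    (hmem : ∀ n, u n ∈ (fd d)^[φ n] '' T ∧ v n ∈ (fd d)^[φ n] '' T)
    (hu : Tendsto u atTop (nhds a)) (hv : Tendsto v atTop (nhds b))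
    (ha : a ∈ (fd d)^[i] '' T) : False := by
  have hdR : (2:ℝ) ≤ (d:ℝ) := by exact_mod_cast hd
  have hdpos : (0:ℝ) < (d:ℝ) := by linarith
  have clash : ∀ {j j' : ℕ}, j ≠ j' → ∀ z : ℂ,
      z ∈ CH ((fd d)^[j] '' T) → z ∈ CH ((fd d)^[j'] '' T) → False :=
    fun hjj z h1 h2 => Set.disjoint_left.mp ((hw _ _).2 hjj) h1 h2
  have hTsucc : ∀ j : ℕ, (fd d)^[j+1] '' T = fd d '' ((fd d)^[j] '' T) := by
    intro j
    rw [Function.iterate_succ', Function.comp_def, ← Set.image_image]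
  have hfd_mem : ∀ {j : ℕ} {x : S1}, x ∈ (fd d)^[j] '' T → fd d x ∈ (fd d)^[j+1] '' T := by
    intro j x hx
    rw [hTsucc]
    exact Set.mem_image_of_mem _ hx
  have fdcoe : ∀ t : ℝ, fd d ((t : ℝ) : S1) = (((d:ℝ) * t : ℝ) : S1) := by
    intro t
    show (d • ((t:ℝ) : S1)) = _
    rw [coe_real_smul]
  -- lifts
  obtain ⟨α, hα⟩ := QuotientAddGroup.mk_surjective a
  set βsub := AddCircle.equivIco 1 α b with hβsub
  set β : ℝ := ↑βsub with hβdef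
  have hβ : ((β : ℝ) : S1) = b := (AddCircle.equivIco 1 α).symm_apply_apply b
  have hβmem : β ∈ Set.Ico α (α + 1) := βsub.2
  have hβne : β ≠ α := by
    intro h
    apply hab
    rw [← hα, ← hβ, h]
  have hαβ : α < β := lt_of_le_of_ne hβmem.1 (Ne.symm hβne)
  have hβlt : β < α + 1 := hβmem.2
  obtain ⟨xs, hxs, hxlim⟩ := lift_tendsto a α hα u hu
  obtain ⟨ys, hys, hylim⟩ := lift_tendsto b β hβ v hv
  set ε : ℕ → ℝ := fun n => xs n - α with hεdef
  set δ : ℕ → ℝ := fun n => ys n - β with hδdef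
  have hεlim : Tendsto ε atTop (nhds 0) := by
    have := hxlim.sub_const α
    simpa using this
  have hδlim : Tendsto δ atTop (nhds 0) := by
    have := hylim.sub_const β
    simpa using this
  -- integer relation from criticality
  have hcoecr : (((d:ℝ) * α : ℝ) : S1) = (((d:ℝ) * β : ℝ) : S1) := by
    rw [← fdcoe, ← fdcoe, hα, hβ]
    exact hcr
  obtain ⟨k, hk⟩ := coe_eq_coe_iff.mp hcoecr
  -- coordinates of images
  have hfdu : ∀ n, fd d (u n) = (((d:ℝ)*α + (d:ℝ)*(ε n) : ℝ) : S1) := by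
    intro n
    rw [← hxs n, fdcoe]
    congr 1
    simp only [hεdef]
    ring
  have hfdv : ∀ n, fd d (v n) = (((d:ℝ)*α + (d:ℝ)*(δ n) : ℝ) : S1) := by
    intro n
    rw [← hys n, fdcoe]
    apply coe_eq_coe_iff.mpr
    refine ⟨-k, ?_⟩
    push_cast
    simp only [hδdef]
    linear_combination -hk
  -- the vertex p = fd d a and another vertex s
  have hpmem : fd d a ∈ (fd d)^[i+1] '' T := hfd_mem ha
  have hpcoe : fd d a = (((d:ℝ) * α : ℝ) : S1) := by rw [← hα, fdcoe]
  have hcard : 1 < ((fd d)^[i+1] '' T).ncard := by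
    rw [(hw (i+1) 0).1]
    omega
  obtain ⟨s, hsmem, hsne⟩ := Set.exists_ne_of_one_lt_ncard hcard (fd d a)
  set σsub := AddCircle.equivIco 1 ((d:ℝ)*α) s with hσsub
  set σ : ℝ := ↑σsub with hσdef
  have hσ : ((σ : ℝ) : S1) = s := (AddCircle.equivIco 1 ((d:ℝ)*α)).symm_apply_apply s
  have hσmem : σ ∈ Set.Ico ((d:ℝ)*α) ((d:ℝ)*α + 1) := σsub.2
  have hσne : σ ≠ (d:ℝ)*α := by
    intro h
    apply hsne
    rw [← hσ, h, ← hpcoe]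
  have hσgt : (d:ℝ)*α < σ := lt_of_le_of_ne hσmem.1 (Ne.symm hσne)
  have hσlt : σ < (d:ℝ)*α + 1 := hσmem.2
  -- smallness constant
  set m : ℝ := min (min (σ - (d:ℝ)*α) ((d:ℝ)*α + 1 - σ) / d) (min (β - α) (α + 1 - β))
    with hmdef
  have hm : 0 < m := by
    apply lt_min
    · apply div_pos (lt_min (by linarith) (by linarith)) hdpos
    · exact lt_min (by linarith) (by linarith)
  have hdm : (d:ℝ) * m ≤ min (σ - (d:ℝ)*α) ((d:ℝ)*α + 1 - σ) := by
    have : m ≤ min (σ - (d:ℝ)*α) ((d:ℝ)*α + 1 - σ) / d := min_le_left _ _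
    calc (d:ℝ) * m ≤ (d:ℝ) * (min (σ - (d:ℝ)*α) ((d:ℝ)*α + 1 - σ) / d) := by
          apply mul_le_mul_of_nonneg_left this (le_of_lt hdpos)
      _ = min (σ - (d:ℝ)*α) ((d:ℝ)*α + 1 - σ) := by field_simp
  have hm3 : m ≤ β - α := le_trans (min_le_right _ _) (min_le_left _ _)
  have hm4 : m ≤ α + 1 - β := le_trans (min_le_right _ _) (min_le_right _ _)
  -- eventual smallness
  have hev : ∀ᶠ n in atTop, (|ε n| < m ∧ |δ n| < m) ∧ i < φ n := by
    have h1 : ∀ᶠ n in atTop, ε n ∈ Set.Ioo (-m) m :=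
      hεlim.eventually (Ioo_mem_nhds (neg_lt_zero.mpr hm) hm)
    have h2 : ∀ᶠ n in atTop, δ n ∈ Set.Ioo (-m) m :=
      hδlim.eventually (Ioo_mem_nhds (neg_lt_zero.mpr hm) hm)
    have h3 : ∀ᶠ n in atTop, i < φ n :=
      Filter.eventually_atTop.mpr ⟨i + 1, fun n hn =>
        lt_of_lt_of_le (Nat.lt_of_succ_le hn) hφ.le_apply⟩
    filter_upwards [h1, h2, h3] with n ha1 ha2 ha3
    exact ⟨⟨abs_lt.mpr ⟨ha1.1, ha1.2⟩, abs_lt.mpr ⟨ha2.1, ha2.2⟩⟩, ha3⟩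
  -- chords as segments
  have hchordn : ∀ n, segment ℝ (E (α + ε n)) (E (β + δ n)) ⊆ CH ((fd d)^[φ n] '' T) := by
    intro n
    have e1 : E (α + ε n) = emb (u n) := by
      rw [← hxs n, emb_coe]
      congr 1
      simp only [hεdef]; ring
    have e2 : E (β + δ n) = emb (v n) := by
      rw [← hys n, emb_coe]
      congr 1
      simp only [hδdef]; ring
    rw [e1, e2]
    exact seg_sub_CH (hmem n).1 (hmem n).2
  have himgn : ∀ n, segment ℝ (E ((d:ℝ)*α + (d:ℝ)*ε n)) (E ((d:ℝ)*α + (d:ℝ)*δ n)) ⊆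
      CH ((fd d)^[φ n + 1] '' T) := by
    intro n
    have e1 : E ((d:ℝ)*α + (d:ℝ)*ε n) = emb (fd d (u n)) := by rw [hfdu n, emb_coe]
    have e2 : E ((d:ℝ)*α + (d:ℝ)*δ n) = emb (fd d (v n)) := by rw [hfdv n, emb_coe]
    rw [e1, e2]
    exact seg_sub_CH (hfd_mem (hmem n).1) (hfd_mem (hmem n).2)
  have hpsseg : segment ℝ (E ((d:ℝ)*α)) (E σ) ⊆ CH ((fd d)^[i+1] '' T) := by
    have e1 : E ((d:ℝ)*α) = emb (fd d a) := by rw [hpcoe, emb_coe]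
    have e2 : E σ = emb s := by rw [← hσ, emb_coe]
    rw [e1, e2]
    exact seg_sub_CH hpmem hsmem
  -- same sign eventually
  have hsame : ∀ᶠ n in atTop, (0 < ε n ∧ 0 < δ n) ∨ (ε n < 0 ∧ δ n < 0) := by
    filter_upwards [hev] with n hn
    obtain ⟨⟨hsm1, hsm2⟩, hiφ⟩ := hn
    have hε0 : ε n ≠ 0 := by
      intro h0
      have hxn : xs n = α := by
        have := h0
        simp only [hεdef] at this
        linarith
      have hun : u n = a := by rw [← hxs n, hxn, hα]
      exact clash (ne_of_lt hiφ) (emb a) (hull_mem ha) (hull_mem (hun ▸ (hmem n).1))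
    have hδ0 : δ n ≠ 0 := by
      intro h0
      have hyn : ys n = β := by
        have := h0
        simp only [hδdef] at this
        linarith
      have hvn : v n = b := by rw [← hys n, hyn, hβ]
      have h1 : fd d (v n) ∈ (fd d)^[φ n + 1] '' T := hfd_mem (hmem n).2
      have h2 : fd d (v n) = fd d a := by rw [hvn, ← hcr]
      exact clash (show i+1 ≠ φ n + 1 by omega) (emb (fd d a))
        (hull_mem hpmem) (hull_mem (h2 ▸ h1))
    have habs_ε : (d:ℝ) * |ε n| < min (σ - (d:ℝ)*α) ((d:ℝ)*α + 1 - σ) :=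
      lt_of_lt_of_le (by nlinarith) hdm
    have habs_δ : (d:ℝ) * |δ n| < min (σ - (d:ℝ)*α) ((d:ℝ)*α + 1 - σ) :=
      lt_of_lt_of_le (by nlinarith) hdm
    have hmin1 : min (σ - (d:ℝ)*α) ((d:ℝ)*α + 1 - σ) ≤ σ - (d:ℝ)*α := min_le_left _ _
    have hmin2 : min (σ - (d:ℝ)*α) ((d:ℝ)*α + 1 - σ) ≤ (d:ℝ)*α + 1 - σ := min_le_right _ _
    rcases lt_trichotomy (ε n) 0 with hεs | hεs | hεs
    · rcases lt_trichotomy (δ n) 0 with hδs | hδs | hδs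
      · exact Or.inr ⟨hεs, hδs⟩
      · exact absurd hδs hδ0
      · -- ε < 0 < δ : crossing with the polygon T_{i+1}
        exfalso
        have hεabs : |ε n| = -(ε n) := abs_of_neg hεs
        have hδabs : |δ n| = δ n := abs_of_pos hδs
        obtain ⟨z, hz1, hz2⟩ := chordX ((d:ℝ)*α + (d:ℝ)*ε n) ((d:ℝ)*α)
          ((d:ℝ)*α + (d:ℝ)*δ n) σ
          (by nlinarith) (by nlinarith) (by nlinarith) (by nlinarith)
        exact clash (show i+1 ≠ φ n + 1 by omega) z (hpsseg hz1) (himgn n hz2)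
    · exact absurd hεs hε0
    · rcases lt_trichotomy (δ n) 0 with hδs | hδs | hδs
      · -- δ < 0 < ε : crossing with the polygon T_{i+1}
        exfalso
        have hεabs : |ε n| = ε n := abs_of_pos hεs
        have hδabs : |δ n| = -(δ n) := abs_of_neg hδs
        obtain ⟨z, hz1, hz2⟩ := chordX ((d:ℝ)*α + (d:ℝ)*δ n) ((d:ℝ)*α)
          ((d:ℝ)*α + (d:ℝ)*ε n) σ
          (by nlinarith) (by nlinarith) (by nlinarith) (by nlinarith)
        have hz2' : z ∈ segment ℝ (E ((d:ℝ)*α + (d:ℝ)*ε n)) (E ((d:ℝ)*α + (d:ℝ)*δ n)) := by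
          rw [segment_symm]
          exact hz2
        exact clash (show i+1 ≠ φ n + 1 by omega) z (hpsseg hz1) (himgn n hz2')
      · exact absurd hδs hδ0
      · exact Or.inl ⟨hεs, hδs⟩
  -- split into frequently-positive / frequently-negative
  have hsplit := (hsame.and hev).frequently
  have hsplit2 : (∃ᶠ n in atTop, (0 < ε n ∧ 0 < δ n) ∧ ((|ε n| < m ∧ |δ n| < m) ∧ i < φ n)) ∨
      (∃ᶠ n in atTop, (ε n < 0 ∧ δ n < 0) ∧ ((|ε n| < m ∧ |δ n| < m) ∧ i < φ n)) := by
    rw [← Filter.frequently_or_distrib]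
    exact hsplit.mono (fun n hn => hn.1.elim (fun h => Or.inl ⟨h, hn.2⟩)
      (fun h => Or.inr ⟨h, hn.2⟩))
  rcases hsplit2 with hP | hQ
  · -- positive case
    obtain ⟨n₀, hn₀⟩ := hP.exists
    have hev2 : ∀ᶠ n in atTop, (ε n < ε n₀ ∧ δ n < δ n₀) ∧ n₀ < n := by
      have h1 : ∀ᶠ n in atTop, ε n < ε n₀ :=
        hεlim.eventually (eventually_lt_nhds hn₀.1.1)
      have h2 : ∀ᶠ n in atTop, δ n < δ n₀ :=
        hδlim.eventually (eventually_lt_nhds hn₀.1.2)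
      filter_upwards [h1, h2, Filter.eventually_gt_atTop n₀] with n g1 g2 g3
      exact ⟨⟨g1, g2⟩, g3⟩
    obtain ⟨n, hn⟩ := (hP.and_eventually hev2).exists
    obtain ⟨⟨⟨hne1, hnd1⟩, _⟩, ⟨hlt1, hlt2⟩, hnn₀⟩ := hn
    have hsm : |ε n₀| < m ∧ |δ n₀| < m := hn₀.2.1
    have hε₀abs : |ε n₀| = ε n₀ := abs_of_pos hn₀.1.1
    have hδ₀abs : |δ n₀| = δ n₀ := abs_of_pos hn₀.1.2
    obtain ⟨z, hz1, hz2⟩ := chordX (α + ε n) (α + ε n₀) (β + δ n) (β + δ n₀)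
      (by linarith) (by nlinarith [hsm.1]) (by linarith) (by nlinarith [hsm.2])
    exact clash (hφ.injective.ne (Nat.ne_of_gt hnn₀)) z
      (hchordn n hz2) (hchordn n₀ hz1)
  · -- negative case
    obtain ⟨n₀, hn₀⟩ := hQ.exists
    have hev2 : ∀ᶠ n in atTop, (ε n₀ < ε n ∧ δ n₀ < δ n) ∧ n₀ < n := by
      have h1 : ∀ᶠ n in atTop, ε n₀ < ε n :=
        hεlim.eventually (eventually_gt_nhds hn₀.1.1)
      have h2 : ∀ᶠ n in atTop, δ n₀ < δ n :=
        hδlim.eventually (eventually_gt_nhds hn₀.1.2)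
      filter_upwards [h1, h2, Filter.eventually_gt_atTop n₀] with n g1 g2 g3
      exact ⟨⟨g1, g2⟩, g3⟩
    obtain ⟨n, hn⟩ := (hQ.and_eventually hev2).exists
    obtain ⟨⟨⟨hne1, hnd1⟩, _⟩, ⟨hlt1, hlt2⟩, hnn₀⟩ := hn
    have hsm : |ε n₀| < m ∧ |δ n₀| < m := hn₀.2.1
    have hε₀abs : |ε n₀| = -(ε n₀) := abs_of_neg hn₀.1.1
    have hδ₀abs : |δ n₀| = -(δ n₀) := abs_of_neg hn₀.1.2
    obtain ⟨z, hz1, hz2⟩ := chordX (α + ε n₀) (α + ε n) (β + δ n₀) (β + δ n)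
      (by linarith) (by nlinarith [hsm.2]) (by linarith) (by nlinarith [hsm.1])
    exact clash (hφ.injective.ne (Nat.ne_of_gt hnn₀)) z
      (hchordn n hz1) (hchordn n₀ hz2)

/-- every critical leaf of a wandering N-gon is disjoint from every
polygon CH(T_i). -/
theorem stmt12 (d N : ℕ) (hd : 2 ≤ d) (hN : 3 ≤ N) (T : Set S1)
    (hw : Wandering d N T) (a b : S1) (hab : a ≠ b)
    (hcr : fd d a = fd d b) (hleaf : InLimitSet d T a b) :
    ∀ i : ℕ, Disjoint (chord a b) (CH ((fd d)^[i] '' T)) := by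
  intro i
  rw [Set.disjoint_left]
  intro x hx hx'
  obtain ⟨φ₀, hφ₀, u₀, v₀, hmem₀, hdist₀⟩ := hleaf
  have hdist₀' : Tendsto (fun n => hausdorffDist (segment ℝ (emb (u₀ n)) (emb (v₀ n)))
      (segment ℝ (emb a) (emb b))) atTop (nhds 0) := hdist₀
  obtain ⟨ψ, hψ, hor⟩ := extract a b hab u₀ v₀ hdist₀'
  set φ : ℕ → ℕ := φ₀ ∘ ψ with hφdef
  set u : ℕ → S1 := u₀ ∘ ψ with hudef
  set v : ℕ → S1 := v₀ ∘ ψ with hvdef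
  have hφc : StrictMono φ := hφ₀.comp hψ
  have hmem : ∀ n, u n ∈ (fd d)^[φ n] '' T ∧ v n ∈ (fd d)^[φ n] '' T :=
    fun n => hmem₀ (ψ n)
  have hmem' : ∀ n, v n ∈ (fd d)^[φ n] '' T ∧ u n ∈ (fd d)^[φ n] '' T :=
    fun n => ⟨(hmem n).2, (hmem n).1⟩
  by_cases hpos : ∃ s ∈ (fd d)^[i] '' T, 0 < G (emb a) (emb b) (emb s)
  · by_cases hneg : ∃ t ∈ (fd d)^[i] '' T, G (emb a) (emb b) (emb t) < 0
    · obtain ⟨s, hs, hGs⟩ := hpos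
      obtain ⟨t, ht, hGt⟩ := hneg
      rcases hor with ⟨hcu, hcv⟩ | ⟨hcu, hcv⟩
      · exact crossing_contra d N T hw i a b φ hφc u v hmem hcu hcv t s ht hs hGt hGs
      · exact crossing_contra d N T hw i b a φ hφc u v hmem hcu hcv s t hs ht
          (by rw [G_swap]; linarith) (by rw [G_swap]; linarith)
    · push_neg at hneg
      have hsign : ∀ s ∈ (fd d)^[i] '' T, G (emb b) (emb a) (emb s) ≤ 0 := fun s hs => by
        rw [G_swap]
        linarith [hneg s hs]
      have hx2 : x ∈ chord b a := by
        rw [chord, segment_symm]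
        exact hx
      rcases touch d N T i b a hab.symm x hx2 hx' hsign with hbmem | hamem
      · rcases hor with ⟨hcu, hcv⟩ | ⟨hcu, hcv⟩
        · exact key d N hd hN T hw b a hab.symm hcr.symm i φ hφc v u hmem' hcv hcu hbmem
        · exact key d N hd hN T hw b a hab.symm hcr.symm i φ hφc u v hmem hcu hcv hbmem
      · rcases hor with ⟨hcu, hcv⟩ | ⟨hcu, hcv⟩
        · exact key d N hd hN T hw a b hab hcr i φ hφc u v hmem hcu hcv hamem
        · exact key d N hd hN T hw a b hab hcr i φ hφc v u hmem' hcv hcu hamem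
  · push_neg at hpos
    rcases touch d N T i a b hab x hx hx' hpos with hamem | hbmem
    · rcases hor with ⟨hcu, hcv⟩ | ⟨hcu, hcv⟩
      · exact key d N hd hN T hw a b hab hcr i φ hφc u v hmem hcu hcv hamem
      · exact key d N hd hN T hw a b hab hcr i φ hφc v u hmem' hcv hcu hamem
    · rcases hor with ⟨hcu, hcv⟩ | ⟨hcu, hcv⟩
      · exact key d N hd hN T hw b a hab.symm hcr.symm i φ hφc v u hmem' hcv hcu hbmem
      · exact key d N hd hN T hw b a hab.symm hcr.symm i φ hφc u v hmem hcu hcv hbmem
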